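/- Let 0 < σ < 1, t ∈ ℝ, n ∈ ℕ, and define u(x₁,x₂) = ( 1/n + n^{−1−σ} cos(n x₂ − t), 1/n + n^{−1−σ} cos(n x₁ − t) ) on ℝ². Then for every multi-index α with |α| = 1 and all x ≠ y, |∂^α u(x) − ∂^α u(y)| ≤ n^{1−σ} |x − y|, and hence sup_{0<|x−y|<h} |∂^α u(x) − ∂^α u(y)|/|x−y|^σ ≤ n^{1−σ} h^{1−σ}, which tends to 0 as h → 0. -/

import Mathlib

open Real Filter

private lemma sin_lip' (a b : ℝ) : |Real.sin a - Real.sin b| ≤ |a - b| := by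
  rw [Real.sin_sub_sin]
  calc |2 * Real.sin ((a-b)/2) * Real.cos ((a+b)/2)|
      = 2 * |Real.sin ((a-b)/2)| * |Real.cos ((a+b)/2)| := by
        rw [abs_mul, abs_mul]; norm_num
    _ ≤ 2 * |(a-b)/2| * 1 := by
        exact mul_le_mul (mul_le_mul_of_nonneg_left Real.abs_sin_le_abs (by norm_num))
          (Real.abs_cos_le_one _) (abs_nonneg _) (by positivity)
    _ = |a - b| := by rw [abs_div, abs_two]; ring

private lemma coord_le' (v : EuclideanSpace ℝ (Fin 2)) (i : Fin 2) : |v i| ≤ ‖v‖ := by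
  rw [EuclideanSpace.norm_eq, ← Real.sqrt_sq_eq_abs]
  apply Real.sqrt_le_sqrt
  have := Finset.single_le_sum (f := fun j => ‖v j‖^2) (fun j _ => sq_nonneg _)
    (Finset.mem_univ i)
  simpa [Real.norm_eq_abs, sq_abs] using this

theorem little_holder_vanishing (σ : ℝ) (hσ0 : 0 < σ) (hσ1 : σ < 1)
    (t : ℝ) (n : ℕ) (hn : 1 ≤ n) :
    let u : EuclideanSpace ℝ (Fin 2) → EuclideanSpace ℝ (Fin 2) := fun x =>
      WithLp.toLp 2 (fun i : Fin 2 => if i = 0 then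
          1 / (n : ℝ) + (n : ℝ) ^ (-(1 : ℝ) - σ) * Real.cos (n * x 1 - t)
        else
          1 / (n : ℝ) + (n : ℝ) ^ (-(1 : ℝ) - σ) * Real.cos (n * x 0 - t))
    (∀ α : Fin 2, ∀ x y : EuclideanSpace ℝ (Fin 2), x ≠ y →
        ‖fderiv ℝ u x (EuclideanSpace.single α 1) - fderiv ℝ u y (EuclideanSpace.single α 1)‖ ≤
          (n : ℝ) ^ ((1 : ℝ) - σ) * ‖x - y‖) ∧
    (∀ α : Fin 2, ∀ h : ℝ, 0 < h → ∀ x y : EuclideanSpace ℝ (Fin 2),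
        0 < ‖x - y‖ → ‖x - y‖ < h →
        ‖fderiv ℝ u x (EuclideanSpace.single α 1) - fderiv ℝ u y (EuclideanSpace.single α 1)‖ /
            ‖x - y‖ ^ σ ≤ (n : ℝ) ^ ((1 : ℝ) - σ) * h ^ ((1 : ℝ) - σ)) ∧
    Tendsto (fun h : ℝ => (n : ℝ) ^ ((1 : ℝ) - σ) * h ^ ((1 : ℝ) - σ))
      (nhdsWithin 0 (Set.Ioi 0)) (nhds 0) := by
  intro u
  have hn0 : (0 : ℝ) < n := by exact_mod_cast hn
  set c : ℝ := (n : ℝ) ^ (-(1 : ℝ) - σ) with hc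
  set K : ℝ := (n : ℝ) ^ ((1 : ℝ) - σ) with hKdef
  have hK : c * n * n = K := by
    rw [hc, hKdef]
    nth_rewrite 2 [← Real.rpow_one (n : ℝ)]
    nth_rewrite 3 [← Real.rpow_one (n : ℝ)]
    rw [← Real.rpow_add hn0, ← Real.rpow_add hn0]
    ring_nf
  have hcpos : 0 < c := Real.rpow_pos_of_pos hn0 _
  -- the derivative computation
  have hasD : ∀ x : EuclideanSpace ℝ (Fin 2), ∀ α : Fin 2,
      fderiv ℝ u x (EuclideanSpace.single α 1) =
        WithLp.toLp 2 (fun i : Fin 2 => if i = 0 then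
            (-(c * n) * Real.sin (n * x 1 - t)) * (EuclideanSpace.single α (1:ℝ)) 1
          else
            (-(c * n) * Real.sin (n * x 0 - t)) * (EuclideanSpace.single α (1:ℝ)) 0) := by
    intro x α
    set e : EuclideanSpace ℝ (Fin 2) ≃L[ℝ] (Fin 2 → ℝ) :=
      PiLp.continuousLinearEquiv 2 ℝ (fun _ : Fin 2 => ℝ) with he
    set w : (Fin 2 → ℝ) → (Fin 2 → ℝ) := fun v i => if i = 0 then
        1 / (n : ℝ) + c * Real.cos (n * v 1 - t)
      else
        1 / (n : ℝ) + c * Real.cos (n * v 0 - t) with hw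
    have key : ∀ (j : Fin 2) (p : Fin 2 → ℝ),
        HasFDerivAt (fun v : Fin 2 → ℝ => 1 / (n : ℝ) + c * Real.cos (n * v j - t))
          ((-(c * n) * Real.sin (n * p j - t)) •
            (ContinuousLinearMap.proj j : (Fin 2 → ℝ) →L[ℝ] ℝ)) p := by
      intro j p
      have hφ : HasDerivAt (fun s : ℝ => 1 / (n : ℝ) + c * Real.cos (n * s - t))
          (-(c * n) * Real.sin (n * p j - t)) (p j) := by
        have h1 : HasDerivAt (fun s : ℝ => (n : ℝ) * s - t) n (p j) := by
          simpa using (HasDerivAt.const_mul (n : ℝ) (hasDerivAt_id (p j))).sub_const t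
        have := ((h1.cos).const_mul c).const_add (1 / (n : ℝ))
        exact this.congr_deriv (by ring)
      exact hφ.comp_hasFDerivAt (f := fun v : Fin 2 → ℝ => v j) p (hasFDerivAt_apply (𝕜 := ℝ) j p)
    set M : (Fin 2 → ℝ) →L[ℝ] (Fin 2 → ℝ) := ContinuousLinearMap.pi
      (fun i : Fin 2 => if i = 0 then
          (-(c * n) * Real.sin (n * (e x) 1 - t)) •
            (ContinuousLinearMap.proj 1 : (Fin 2 → ℝ) →L[ℝ] ℝ)
        else
          (-(c * n) * Real.sin (n * (e x) 0 - t)) •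
            (ContinuousLinearMap.proj 0 : (Fin 2 → ℝ) →L[ℝ] ℝ)) with hM
    have hwD : HasFDerivAt w M (e x) := by
      rw [hM]
      apply hasFDerivAt_pi''
      intro i
      rw [ContinuousLinearMap.proj_pi]
      fin_cases i
      · simpa [w] using key 1 (e x)
      · simpa [w] using key 0 (e x)
    have huD : HasFDerivAt u ((e.symm : (Fin 2 → ℝ) →L[ℝ] EuclideanSpace ℝ (Fin 2)).comp
        (M.comp (e : EuclideanSpace ℝ (Fin 2) →L[ℝ] (Fin 2 → ℝ)))) x := by
      have h1 : HasFDerivAt (⇑e) (e : EuclideanSpace ℝ (Fin 2) →L[ℝ] (Fin 2 → ℝ)) x :=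
        e.hasFDerivAt
      have h2 := hwD.comp x h1
      have h3 := (e.symm.hasFDerivAt (x := w (e x))).comp x h2
      exact h3
    rw [huD.fderiv]
    refine PiLp.ext fun i => ?_
    fin_cases i <;>
      · simp only [he, ContinuousLinearMap.comp_apply, ContinuousLinearEquiv.coe_coe,
          ContinuousLinearMap.pi_apply, ContinuousLinearMap.smul_apply,
          ContinuousLinearMap.proj_apply, PiLp.continuousLinearEquiv_apply,
          PiLp.continuousLinearEquiv_symm_apply, PiLp.coe_continuousLinearEquiv,
          PiLp.coe_symm_continuousLinearEquiv, EuclideanSpace.single_apply, smul_eq_mul]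
        simp only [hM, ContinuousLinearMap.pi_apply, Pi.single_apply, mul_ite,
          ContinuousLinearMap.smul_apply, ContinuousLinearMap.proj_apply, smul_eq_mul,
          mul_one, mul_zero]
        norm_num
        simp [Pi.single_apply, show (e x : Fin 2 → ℝ) = x from rfl]
        split <;> simp
  have part1 : ∀ α : Fin 2, ∀ x y : EuclideanSpace ℝ (Fin 2), x ≠ y →
      ‖fderiv ℝ u x (EuclideanSpace.single α 1) - fderiv ℝ u y (EuclideanSpace.single α 1)‖ ≤
        K * ‖x - y‖ := by
    intro α x y _
    have bound : ∀ j : Fin 2,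
        |(-(c * n) * Real.sin (n * x j - t)) - (-(c * n) * Real.sin (n * y j - t))| ≤
          K * ‖x - y‖ := by
      intro j
      have hrw : (-(c * n) * Real.sin (n * x j - t)) - (-(c * n) * Real.sin (n * y j - t))
          = (c * n) * (Real.sin (n * y j - t) - Real.sin (n * x j - t)) := by ring
      rw [hrw, abs_mul, abs_of_pos (show (0:ℝ) < c * n by positivity),
        abs_sub_comm]
      calc (c * n) * |Real.sin (n * x j - t) - Real.sin (n * y j - t)|
          ≤ (c * n) * |(n * x j - t) - (n * y j - t)| := by
            apply mul_le_mul_of_nonneg_left (sin_lip' _ _) (by positivity)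
        _ = (c * n * n) * |x j - y j| := by
            rw [show (n * x j - t) - (n * y j - t) = n * (x j - y j) by ring, abs_mul,
              abs_of_pos hn0]; ring
        _ ≤ K * ‖x - y‖ := by
            rw [hK]
            apply mul_le_mul_of_nonneg_left _ (by rw [← hK]; positivity)
            have := coord_le' (x - y) j
            simpa [PiLp.sub_apply] using this
    fin_cases α
    · show ‖fderiv ℝ u x (EuclideanSpace.single 0 1) - fderiv ℝ u y (EuclideanSpace.single 0 1)‖ ≤
        K * ‖x - y‖
      rw [hasD x 0, hasD y 0]
      have : (WithLp.toLp 2 (fun i : Fin 2 => if i = 0 then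
            (-(c * n) * Real.sin (n * x 1 - t)) * (EuclideanSpace.single (0:Fin 2) (1:ℝ)) 1
          else
            (-(c * n) * Real.sin (n * x 0 - t)) * (EuclideanSpace.single (0:Fin 2) (1:ℝ)) 0) -
          WithLp.toLp 2 (fun i : Fin 2 => if i = 0 then
            (-(c * n) * Real.sin (n * y 1 - t)) * (EuclideanSpace.single (0:Fin 2) (1:ℝ)) 1
          else
            (-(c * n) * Real.sin (n * y 0 - t)) * (EuclideanSpace.single (0:Fin 2) (1:ℝ)) 0)
          : EuclideanSpace ℝ (Fin 2)) =
          EuclideanSpace.single (1 : Fin 2)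
            ((-(c * n) * Real.sin (n * x 0 - t)) - (-(c * n) * Real.sin (n * y 0 - t))) := by
        ext i
        fin_cases i <;> simp [PiLp.sub_apply, EuclideanSpace.single_apply]
      rw [this, EuclideanSpace.norm_single, Real.norm_eq_abs]
      exact bound 0
    · show ‖fderiv ℝ u x (EuclideanSpace.single 1 1) - fderiv ℝ u y (EuclideanSpace.single 1 1)‖ ≤
        K * ‖x - y‖
      rw [hasD x 1, hasD y 1]
      have : (WithLp.toLp 2 (fun i : Fin 2 => if i = 0 then
            (-(c * n) * Real.sin (n * x 1 - t)) * (EuclideanSpace.single (1:Fin 2) (1:ℝ)) 1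
          else
            (-(c * n) * Real.sin (n * x 0 - t)) * (EuclideanSpace.single (1:Fin 2) (1:ℝ)) 0) -
          WithLp.toLp 2 (fun i : Fin 2 => if i = 0 then
            (-(c * n) * Real.sin (n * y 1 - t)) * (EuclideanSpace.single (1:Fin 2) (1:ℝ)) 1
          else
            (-(c * n) * Real.sin (n * y 0 - t)) * (EuclideanSpace.single (1:Fin 2) (1:ℝ)) 0)
          : EuclideanSpace ℝ (Fin 2)) =
          EuclideanSpace.single (0 : Fin 2)
            ((-(c * n) * Real.sin (n * x 1 - t)) - (-(c * n) * Real.sin (n * y 1 - t))) := by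
        ext i
        fin_cases i <;> simp [PiLp.sub_apply, EuclideanSpace.single_apply]
      rw [this, EuclideanSpace.norm_single, Real.norm_eq_abs]
      exact bound 1
  have hKnonneg : 0 ≤ K := le_of_lt (Real.rpow_pos_of_pos hn0 _)
  refine ⟨part1, ?_, ?_⟩
  · intro α h hh x y hr hrh
    have hne : x ≠ y := by
      intro hxy; rw [hxy] at hr; simp at hr
    have h1 := part1 α x y hne
    set r := ‖x - y‖ with hrdef
    have hrpos : 0 < r := hr
    have hrσ : 0 < r ^ σ := Real.rpow_pos_of_pos hrpos σ
    rw [div_le_iff₀ hrσ]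
    calc ‖fderiv ℝ u x (EuclideanSpace.single α 1) - fderiv ℝ u y (EuclideanSpace.single α 1)‖
        ≤ K * r := h1
      _ = K * r ^ ((1:ℝ) - σ) * r ^ σ := by
          rw [mul_assoc, ← Real.rpow_add hrpos, sub_add_cancel, Real.rpow_one]
      _ ≤ K * h ^ ((1:ℝ) - σ) * r ^ σ := by
          apply mul_le_mul_of_nonneg_right _ (le_of_lt hrσ)
          apply mul_le_mul_of_nonneg_left _ hKnonneg
          exact Real.rpow_le_rpow (le_of_lt hrpos) (le_of_lt hrh) (by linarith)
  · have hcont : Tendsto (fun h : ℝ => h ^ ((1:ℝ) - σ)) (nhdsWithin 0 (Set.Ioi 0)) (nhds 0) := by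
      have h1 : ContinuousAt (fun h : ℝ => h ^ ((1:ℝ) - σ)) 0 :=
        Real.continuousAt_rpow_const 0 _ (Or.inr (by linarith))
      have := h1.tendsto.mono_left (nhdsWithin_le_nhds (s := Set.Ioi (0:ℝ)))
      simpa [Real.zero_rpow (show (1:ℝ) - σ ≠ 0 by linarith)] using this
    simpa using hcont.const_mul K
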